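/- Let μ be an absolutely continuous probability measure on ℝ with finite first moment, density ρ_μ, and CDF F_μ. For y_1 < y_2 define W(y_1, y_2) = ∫_{−∞}^{(y_1+y_2)/2} |x − y_1| dμ + ∫_{(y_1+y_2)/2}^{∞} |x − y_2| dμ. Then W is differentiable with ∂_{y_1} W(y_1,y_2) = 2F_μ(y_1) − F_μ((y_1+y_2)/2) and ∂_{y_2} W(y_1,y_2) = 2F_μ(y_2) − 1 − F_μ((y_1+y_2)/2). -/

import Mathlib

open MeasureTheory ProbabilityTheory Set

open Filter Asymptotics intervalIntegral

lemma myInt (μ : Measure ℝ) [IsFiniteMeasure μ] (hint : Integrable (fun x => |x|) μ) (c : ℝ) :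
    Integrable (fun x => |x - c|) μ := by
  refine (hint.add (integrable_const |c|)).mono'
    ((continuous_abs.comp (continuous_id.sub continuous_const)).aestronglyMeasurable) ?_
  filter_upwards with x
  have : |x - c| ≤ |x| + |c| := by
    calc |x - c| = |x + (-c)| := by ring_nf
    _ ≤ |x| + |(-c)| := abs_add_le x (-c)
    _ = |x| + |c| := by rw [abs_neg]
  simpa [Real.norm_eq_abs, abs_abs] using this

lemma myIccSmall (μ : Measure ℝ) [IsFiniteMeasure μ] (c : ℝ) (hc : μ {c} = 0) {ε : ℝ}
    (hε : 0 < ε) : ∃ δ > 0, (μ (Icc (c - δ) (c + δ))).toReal < ε := by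
  set s : ℕ → Set ℝ := fun n => Icc (c - 1/(n+1)) (c + 1/(n+1)) with hs
  have hanti : Antitone s := by
    intro a b hab
    apply Icc_subset_Icc <;>
    · have h1 : (1:ℝ)/(b+1) ≤ 1/(a+1) := by
        apply one_div_le_one_div_of_le (by positivity) (by exact_mod_cast by omega)
      linarith
  have hiInter : ⋂ n, s n = {c} := by
    ext x
    simp only [mem_iInter, hs, mem_Icc, mem_singleton_iff]
    constructor
    · intro h
      by_contra hne
      have hpos : 0 < |x - c| := abs_pos.2 (sub_ne_zero.2 hne)
      obtain ⟨n, hn⟩ := exists_nat_one_div_lt hpos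
      have := h n
      have : |x - c| ≤ 1/(n+1) := abs_sub_le_iff.2 ⟨by linarith [this.2], by linarith [this.1]⟩
      linarith
    · rintro rfl
      intro n
      constructor <;> [linarith [one_div_pos.2 (by positivity : (0:ℝ) < n+1)];
        linarith [one_div_pos.2 (by positivity : (0:ℝ) < n+1)]]
  have htend : Tendsto (fun n => μ (s n)) atTop (nhds 0) := by
    have := MeasureTheory.tendsto_measure_iInter_atTop
      (μ := μ) (s := s) (fun n => (measurableSet_Icc).nullMeasurableSet)
      hanti ⟨0, measure_ne_top μ _⟩
    rwa [hiInter, hc] at this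
  have : ∀ᶠ n in atTop, μ (s n) < ENNReal.ofReal ε := by
    refine htend.eventually_lt_const ?_
    simp [ENNReal.ofReal_pos.2 hε]
  obtain ⟨n, hn⟩ := this.exists
  refine ⟨1/(n+1), by positivity, ?_⟩
  calc (μ (Icc (c - 1/(n+1)) (c + 1/(n+1)))).toReal
      < ε := by
        have := ENNReal.toReal_lt_of_lt_ofReal hn
        exact this

lemma mySlope (μ : Measure ℝ) [IsProbabilityMeasure μ] (hint : Integrable (fun x => |x|) μ)
    (t h : ℝ) (S : Set ℝ) (hS : MeasurableSet S) :
    |(∫ x in S, |x - (t + h)| ∂μ) - (∫ x in S, |x - t| ∂μ)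
      - h * ((μ (S ∩ Iic t)).toReal - (μ (S ∩ Ioi t)).toReal)|
      ≤ 2 * |h| * (μ (Icc (t - |h|) (t + |h|))).toReal := by
  set s : ℝ → ℝ := fun x =>
    (Iic t).indicator (fun _ => (1:ℝ)) x - (Ioi t).indicator (fun _ => (1:ℝ)) x with hsdef
  have hs_int : Integrable s (μ.restrict S) :=
    (((integrable_const (1:ℝ)).indicator measurableSet_Iic).sub
      ((integrable_const (1:ℝ)).indicator measurableSet_Ioi)).restrict
  have hs_val : ∫ x in S, s x ∂μ = (μ (S ∩ Iic t)).toReal - (μ (S ∩ Ioi t)).toReal := by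
    rw [hsdef]
    rw [integral_sub (((integrable_const (1:ℝ)).indicator measurableSet_Iic).restrict)
      (((integrable_const (1:ℝ)).indicator measurableSet_Ioi).restrict)]
    rw [setIntegral_indicator measurableSet_Iic, setIntegral_indicator measurableSet_Ioi]
    simp [setIntegral_const, smul_eq_mul]
    rfl
  have hint1 : Integrable (fun x => |x - (t+h)|) (μ.restrict S) := (myInt μ hint _).restrict
  have hint2 : Integrable (fun x => |x - t|) (μ.restrict S) := (myInt μ hint _).restrict
  set g : ℝ → ℝ := fun x => |x - (t + h)| - |x - t| - h * s x with hgdef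
  have key : (∫ x in S, |x - (t + h)| ∂μ) - (∫ x in S, |x - t| ∂μ)
      - h * ((μ (S ∩ Iic t)).toReal - (μ (S ∩ Ioi t)).toReal) = ∫ x in S, g x ∂μ := by
    have e1 : ∫ x in S, g x ∂μ
        = (∫ x in S, (|x - (t + h)| - |x - t|) ∂μ) - ∫ x in S, h * s x ∂μ :=
      integral_sub (hint1.sub hint2) (hs_int.const_mul h)
    have e2 : ∫ x in S, (|x - (t + h)| - |x - t|) ∂μ
        = (∫ x in S, |x - (t + h)| ∂μ) - ∫ x in S, |x - t| ∂μ := integral_sub hint1 hint2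
    have e3 : ∫ x in S, h * s x ∂μ = h * ∫ x in S, s x ∂μ := integral_const_mul h s
    rw [e1, e2, e3, hs_val]

  rw [key]
  -- pointwise bound
  have hbound : ∀ x, |g x| ≤ (Icc (t - |h|) (t + |h|)).indicator (fun _ => 2 * |h|) x := by
    intro x
    have hsval : s x = if x ≤ t then (1:ℝ) else -1 := by
      rw [hsdef]
      by_cases hx : x ≤ t
      · simp only [indicator, mem_Iic, mem_Ioi, if_pos hx, if_neg (not_lt.2 hx)]
        simp [hx]
      · simp only [indicator, mem_Iic, mem_Ioi, if_neg hx, if_pos (not_le.1 hx)]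
        simp [hx]
    by_cases hx : x ∈ Icc (t - |h|) (t + |h|)
    · rw [indicator_of_mem hx]
      have h1 : |(|x - (t+h)| - |x - t|)| ≤ |h| := by
        have h0 := abs_abs_sub_abs_le_abs_sub (x - (t+h)) (x - t)
        have he : (x - (t+h)) - (x - t) = -h := by ring
        rw [he, abs_neg] at h0
        exact h0
      have h2 : |h * s x| ≤ |h| := by
        rw [abs_mul, hsval]
        rcases le_or_gt x t with hc | hc
        · simp [hc]
        · simp [not_le.2 hc]
      calc |g x| ≤ |(|x - (t+h)| - |x - t|)| + |h * s x| := by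
            rw [hgdef]; exact abs_sub _ _
      _ ≤ |h| + |h| := add_le_add h1 h2
      _ = 2 * |h| := by ring
    · rw [indicator_of_notMem hx]
      have hx' : x < t - |h| ∨ t + |h| < x := by
        rcases lt_or_ge x (t - |h|) with hc | hc
        · exact Or.inl hc
        · right; by_contra hcon; exact hx ⟨hc, not_lt.1 hcon⟩
      have hg0 : g x = 0 := by
        rcases hx' with hc | hc
        · have hxt : x ≤ t := by have := abs_nonneg h; linarith
          have h1 : |x - (t+h)| = t + h - x := by
            rw [abs_sub_comm, abs_of_nonneg (by linarith [neg_abs_le h] : 0 ≤ t + h - x)]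
          have h2 : |x - t| = t - x := by
            rw [abs_sub_comm, abs_of_nonneg (by linarith : 0 ≤ t - x)]
          rw [hgdef]; simp only [hsval, if_pos hxt, h1, h2]; ring
        · have hxt : ¬ x ≤ t := by have := abs_nonneg h; push_neg; linarith
          have h1 : |x - (t+h)| = x - (t+h) :=
            abs_of_nonneg (by linarith [le_abs_self h] : 0 ≤ x - (t+h))
          have h2 : |x - t| = x - t := abs_of_nonneg (by linarith : 0 ≤ x - t)
          rw [hgdef]; simp only [hsval, if_neg hxt, h1, h2]; ring
      simp [hg0]
  have hg_int : Integrable g (μ.restrict S) := (hint1.sub hint2).sub (hs_int.const_mul h)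
  calc |∫ x in S, g x ∂μ| ≤ ∫ x in S, |g x| ∂μ := by
        simpa [Real.norm_eq_abs] using norm_integral_le_integral_norm (μ := μ.restrict S) g
  _ ≤ ∫ x in S, (Icc (t - |h|) (t + |h|)).indicator (fun _ => 2 * |h|) x ∂μ := by
      exact integral_mono hg_int.abs
        (((integrable_const (2*|h|)).indicator measurableSet_Icc).restrict) hbound
  _ = (μ (S ∩ Icc (t - |h|) (t + |h|))).toReal * (2 * |h|) := by
      rw [setIntegral_indicator measurableSet_Icc, setIntegral_const, smul_eq_mul]
      rfl
  _ ≤ (μ (Icc (t - |h|) (t + |h|))).toReal * (2 * |h|) := by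
      apply mul_le_mul_of_nonneg_right _ (by positivity)
      exact ENNReal.toReal_mono (measure_ne_top μ _) (measure_mono inter_subset_right)
  _ = 2 * |h| * (μ (Icc (t - |h|) (t + |h|))).toReal := by ring

open scoped Interval in
lemma myBoundary (μ : Measure ℝ) [IsProbabilityMeasure μ] (hint : Integrable (fun x => |x|) μ)
    (u v m h : ℝ) (hm : u + v = 2 * m + h) (hu : u ≤ m - |h|) (hv : m + |h| ≤ v) :
    |((∫ x in Iic (m + h/2), |x - u| ∂μ) + ∫ x in Ioi (m + h/2), |x - v| ∂μ)
      - ((∫ x in Iic m, |x - u| ∂μ) + ∫ x in Ioi m, |x - v| ∂μ)|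
      ≤ 2 * |h| * (μ (Icc (m - |h|) (m + |h|))).toReal := by
  have hIu := myInt μ hint u
  have hIv := myInt μ hint v
  have e1 : (∫ x in Iic (m + h/2), |x - u| ∂μ) - ∫ x in Iic m, |x - u| ∂μ
      = ∫ x in m..(m + h/2), |x - u| ∂μ :=
    integral_Iic_sub_Iic hIu.integrableOn hIu.integrableOn
  have e2 : (∫ x in Ioi (m + h/2), |x - v| ∂μ) - ∫ x in Ioi m, |x - v| ∂μ
      = -∫ x in m..(m + h/2), |x - v| ∂μ := by
    have a1 := integral_Iic_add_Ioi (b := m + h/2) hIv.integrableOn hIv.integrableOn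
    have a2 := integral_Iic_add_Ioi (b := m) hIv.integrableOn hIv.integrableOn
    have a3 := integral_Iic_sub_Iic (a := m) (b := m + h/2)
      hIv.integrableOn hIv.integrableOn
    linarith
  have e3 : ((∫ x in Iic (m + h/2), |x - u| ∂μ) + ∫ x in Ioi (m + h/2), |x - v| ∂μ)
      - ((∫ x in Iic m, |x - u| ∂μ) + ∫ x in Ioi m, |x - v| ∂μ)
      = ∫ x in m..(m + h/2), (|x - u| - |x - v|) ∂μ := by
    rw [intervalIntegral.integral_sub hIu.intervalIntegrable hIv.intervalIntegrable]
    linarith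
  rw [e3, intervalIntegral_eq_integral_uIoc]
  have habs : |(if m ≤ m + h/2 then (1:ℝ) else -1) • ∫ x in Ι m (m + h/2), (|x - u| - |x - v|) ∂μ|
      = |∫ x in Ι m (m + h/2), (|x - u| - |x - v|) ∂μ| := by
    by_cases hc : m ≤ m + h/2 <;> simp [hc]
  rw [habs]
  -- bounds on uIoc
  have hxm : ∀ x ∈ Ι m (m + h/2), m - |h|/2 ≤ x ∧ x ≤ m + |h|/2 := by
    intro x hx
    rcases le_total m (m + h/2) with hc | hc
    · rw [uIoc_of_le hc] at hx
      have := le_abs_self h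
      exact ⟨by linarith [hx.1], by linarith [hx.2]⟩
    · rw [uIoc_of_ge hc] at hx
      have := neg_abs_le h
      exact ⟨by linarith [hx.1], by linarith [hx.2]⟩
  have hptw : ∀ x ∈ Ι m (m + h/2), ‖|x - u| - |x - v|‖ ≤ 2 * |h| := by
    intro x hx
    obtain ⟨hx1, hx2⟩ := hxm x hx
    have h0 := abs_nonneg h
    have h1 : |x - u| = x - u := abs_of_nonneg (by linarith)
    have h2 : |x - v| = v - x := by
      rw [abs_sub_comm]; exact abs_of_nonneg (by linarith)
    rw [Real.norm_eq_abs, h1, h2]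
    have he : (x - u) - (v - x) = 2 * (x - m) - h := by linarith
    rw [he]
    calc |2 * (x - m) - h| ≤ |2 * (x - m)| + |h| := abs_sub _ _
    _ = 2 * |x - m| + |h| := by rw [abs_mul]; norm_num
    _ ≤ 2 * (|h|/2) + |h| := by
        have : |x - m| ≤ |h|/2 := abs_le.2 ⟨by linarith, by linarith⟩
        linarith
    _ = 2 * |h| := by ring
  have hmeas : AEStronglyMeasurable (fun x => |x - u| - |x - v|)
      (μ.restrict (Ι m (m + h/2))) :=
    (((continuous_abs.comp (continuous_id.sub continuous_const)).sub
      (continuous_abs.comp (continuous_id.sub continuous_const))).aestronglyMeasurable).restrict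
  have hbig := norm_setIntegral_le_of_norm_le_const (μ := μ) (s := Ι m (m + h/2))
    (C := 2 * |h|) (measure_lt_top μ _) hptw
  rw [Real.norm_eq_abs] at hbig
  refine hbig.trans ?_
  apply mul_le_mul_of_nonneg_left _ (by positivity)
  apply ENNReal.toReal_mono (measure_ne_top μ _)
  apply measure_mono
  intro x hx
  obtain ⟨hx1, hx2⟩ := hxm x hx
  have h0 := abs_nonneg h
  exact ⟨by linarith, by linarith⟩

/-- The transport cost from `μ` to the two-point configuration `(y₁, y₂)` with mass
split at the midpoint `(y₁ + y₂)/2`. -/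
noncomputable def twoFacilityCost (μ : Measure ℝ) (y₁ y₂ : ℝ) : ℝ :=
  (∫ x in Iic ((y₁ + y₂) / 2), |x - y₁| ∂μ) + ∫ x in Ioi ((y₁ + y₂) / 2), |x - y₂| ∂μ

/-- for an absolutely continuous probability measure `μ` with finite
first moment (density `ρ`), the two-facility cost `W` is differentiable in each
variable, with `∂_{y₁} W = 2 F_μ(y₁) - F_μ((y₁+y₂)/2)` and
`∂_{y₂} W = 2 F_μ(y₂) - 1 - F_μ((y₁+y₂)/2)`. -/
theorem partial_derivs_twoFacilityCost (μ : Measure ℝ) [IsProbabilityMeasure μ]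
    (ρ : ℝ → ℝ) (hρnn : ∀ x, 0 ≤ ρ x)
    (hρ : μ = volume.withDensity fun x => ENNReal.ofReal (ρ x))
    (hsupp : (Function.support ρ).OrdConnected)
    (hpos : ∀ x ∈ interior (Function.support ρ), 0 < ρ x)
    (hint : Integrable (fun x => |x|) μ) :
    ∀ y₁ y₂ : ℝ, y₁ < y₂ →
      HasDerivAt (fun t => twoFacilityCost μ t y₂)
          (2 * cdf μ y₁ - cdf μ ((y₁ + y₂) / 2)) y₁ ∧
        HasDerivAt (fun t => twoFacilityCost μ y₁ t)
          (2 * cdf μ y₂ - 1 - cdf μ ((y₁ + y₂) / 2)) y₂ := by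
  have hnull : ∀ c : ℝ, μ {c} = 0 := by
    intro c
    rw [hρ, withDensity_apply _ (measurableSet_singleton c)]
    have hz : volume.restrict ({c} : Set ℝ) = 0 := by
      rw [Measure.restrict_eq_zero]; exact Real.volume_singleton
    rw [hz, lintegral_zero_measure]
  have hIocToReal : ∀ a b : ℝ, a ≤ b → (μ (Ioc a b)).toReal = cdf μ b - cdf μ a := by
    intro a b hab
    rw [← Iic_sdiff_Iic,
      measure_diff (Iic_subset_Iic.2 hab) measurableSet_Iic.nullMeasurableSet (measure_ne_top μ _),
      ENNReal.toReal_sub_of_le (measure_mono (Iic_subset_Iic.2 hab)) (measure_ne_top μ _),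
      cdf_eq_real, cdf_eq_real, measureReal_def, measureReal_def]
  intro y₁ y₂ hy
  set m : ℝ := (y₁ + y₂) / 2 with hmdef
  have hy₁m : y₁ < m := by rw [hmdef]; linarith
  have hmy₂ : m < y₂ := by rw [hmdef]; linarith
  set d : ℝ := (y₂ - y₁) / 2 with hddef
  have hd : 0 < d := by rw [hddef]; linarith
  have hmy₁ : m - y₁ = d := by rw [hmdef, hddef]; ring
  have hy₂m : y₂ - m = d := by rw [hmdef, hddef]; ring
  constructor
  · -- ∂ y₁
    set L : ℝ := 2 * cdf μ y₁ - cdf μ m with hLdef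
    have hLval : (μ (Iic m ∩ Iic y₁)).toReal - (μ (Iic m ∩ Ioi y₁)).toReal = L := by
      have h1 : Iic m ∩ Iic y₁ = Iic y₁ := by
        rw [Iic_inter_Iic, min_eq_right hy₁m.le]
      have h2 : Iic m ∩ Ioi y₁ = Ioc y₁ m := by
        rw [inter_comm, Ioi_inter_Iic]
      rw [h1, h2, hIocToReal y₁ m hy₁m.le, hLdef]
      simp only [cdf_eq_real, measureReal_def]
      ring
    rw [hasDerivAt_iff_isLittleO_nhds_zero, isLittleO_iff]
    intro ε hε
    obtain ⟨δ₁, hδ₁, hA⟩ := myIccSmall μ y₁ (hnull y₁) (show (0:ℝ) < ε/4 by linarith)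
    obtain ⟨δ₂, hδ₂, hB⟩ := myIccSmall μ m (hnull m) (show (0:ℝ) < ε/4 by linarith)
    have hδ : 0 < min (min δ₁ δ₂) (d/2) := by positivity
    filter_upwards [Metric.ball_mem_nhds (0:ℝ) hδ] with h hh
    rw [Metric.mem_ball, Real.dist_eq, sub_zero] at hh
    have hh1 : |h| < δ₁ := lt_of_lt_of_le hh (le_trans (min_le_left _ _) (min_le_left _ _))
    have hh2 : |h| < δ₂ := lt_of_lt_of_le hh (le_trans (min_le_left _ _) (min_le_right _ _))
    have hhd : |h| ≤ d/2 := (lt_of_lt_of_le hh (min_le_right _ _)).le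
    simp only [twoFacilityCost, Real.norm_eq_abs, smul_eq_mul]
    have hm' : (y₁ + h + y₂) / 2 = m + h/2 := by rw [hmdef]; ring
    rw [hm']
    set A₁ : ℝ := ∫ x in Iic (m + h/2), |x - (y₁ + h)| ∂μ with hA₁
    set A₂ : ℝ := ∫ x in Ioi (m + h/2), |x - y₂| ∂μ with hA₂
    set B₁ : ℝ := ∫ x in Iic m, |x - y₁| ∂μ with hB₁
    set B₂ : ℝ := ∫ x in Ioi m, |x - y₂| ∂μ with hB₂
    set C : ℝ := ∫ x in Iic m, |x - (y₁ + h)| ∂μ with hC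
    have hsplit : A₁ + A₂ - (B₁ + B₂) - h * L
        = ((A₁ + A₂) - (C + B₂)) + (C - B₁ - h * L) := by ring
    rw [hsplit]
    have hbd : |(A₁ + A₂) - (C + B₂)| ≤ 2 * |h| * (μ (Icc (m - |h|) (m + |h|))).toReal := by
      apply myBoundary μ hint (y₁ + h) y₂ m h
      · rw [hmdef]; ring
      · have := le_abs_self h; linarith [hmy₁]
      · linarith [hy₂m]
    have hsl : |C - B₁ - h * L| ≤ 2 * |h| * (μ (Icc (y₁ - |h|) (y₁ + |h|))).toReal := by
      rw [← hLval]
      exact mySlope μ hint y₁ h (Iic m) measurableSet_Iic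
    have hAh : (μ (Icc (y₁ - |h|) (y₁ + |h|))).toReal ≤ ε/4 := by
      refine le_trans (ENNReal.toReal_mono (measure_ne_top μ _)
        (measure_mono (Icc_subset_Icc (by linarith) (by linarith)))) hA.le
    have hBh : (μ (Icc (m - |h|) (m + |h|))).toReal ≤ ε/4 := by
      refine le_trans (ENNReal.toReal_mono (measure_ne_top μ _)
        (measure_mono (Icc_subset_Icc (by linarith) (by linarith)))) hB.le
    calc |((A₁ + A₂) - (C + B₂)) + (C - B₁ - h * L)|
        ≤ |(A₁ + A₂) - (C + B₂)| + |C - B₁ - h * L| := abs_add_le _ _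
    _ ≤ 2 * |h| * (ε/4) + 2 * |h| * (ε/4) := by
        refine add_le_add (hbd.trans ?_) (hsl.trans ?_) <;>
          exact mul_le_mul_of_nonneg_left (by assumption) (by positivity)
    _ = ε * |h| := by ring
  · -- ∂ y₂
    set L : ℝ := 2 * cdf μ y₂ - 1 - cdf μ m with hLdef
    have hLval : (μ (Ioi m ∩ Iic y₂)).toReal - (μ (Ioi m ∩ Ioi y₂)).toReal = L := by
      have h1 : Ioi m ∩ Iic y₂ = Ioc m y₂ := Ioi_inter_Iic
      have h2 : Ioi m ∩ Ioi y₂ = Ioi y₂ := by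
        rw [Ioi_inter_Ioi, max_eq_right hmy₂.le]
      have h3 : (μ (Ioi y₂)).toReal = 1 - cdf μ y₂ := by
        have := measure_compl (μ := μ) measurableSet_Iic (measure_ne_top μ (Iic y₂))
        rw [compl_Iic] at this
        rw [this, measure_univ,
          ENNReal.toReal_sub_of_le prob_le_one ENNReal.one_ne_top, ENNReal.toReal_one,
          cdf_eq_real, measureReal_def]
      rw [h1, h2, hIocToReal m y₂ hmy₂.le, h3, hLdef]
      simp only [cdf_eq_real, measureReal_def]
      ring
    rw [hasDerivAt_iff_isLittleO_nhds_zero, isLittleO_iff]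
    intro ε hε
    obtain ⟨δ₁, hδ₁, hA⟩ := myIccSmall μ y₂ (hnull y₂) (show (0:ℝ) < ε/4 by linarith)
    obtain ⟨δ₂, hδ₂, hB⟩ := myIccSmall μ m (hnull m) (show (0:ℝ) < ε/4 by linarith)
    have hδ : 0 < min (min δ₁ δ₂) (d/2) := by positivity
    filter_upwards [Metric.ball_mem_nhds (0:ℝ) hδ] with h hh
    rw [Metric.mem_ball, Real.dist_eq, sub_zero] at hh
    have hh1 : |h| < δ₁ := lt_of_lt_of_le hh (le_trans (min_le_left _ _) (min_le_left _ _))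
    have hh2 : |h| < δ₂ := lt_of_lt_of_le hh (le_trans (min_le_left _ _) (min_le_right _ _))
    have hhd : |h| ≤ d/2 := (lt_of_lt_of_le hh (min_le_right _ _)).le
    simp only [twoFacilityCost, Real.norm_eq_abs, smul_eq_mul]
    have hm' : (y₁ + (y₂ + h)) / 2 = m + h/2 := by rw [hmdef]; ring
    rw [hm']
    set A₁ : ℝ := ∫ x in Iic (m + h/2), |x - y₁| ∂μ with hA₁
    set A₂ : ℝ := ∫ x in Ioi (m + h/2), |x - (y₂ + h)| ∂μ with hA₂
    set B₁ : ℝ := ∫ x in Iic m, |x - y₁| ∂μ with hB₁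
    set B₂ : ℝ := ∫ x in Ioi m, |x - y₂| ∂μ with hB₂
    set C : ℝ := ∫ x in Ioi m, |x - (y₂ + h)| ∂μ with hC
    have hsplit : A₁ + A₂ - (B₁ + B₂) - h * L
        = ((A₁ + A₂) - (B₁ + C)) + (C - B₂ - h * L) := by ring
    rw [hsplit]
    have hbd : |(A₁ + A₂) - (B₁ + C)| ≤ 2 * |h| * (μ (Icc (m - |h|) (m + |h|))).toReal := by
      apply myBoundary μ hint y₁ (y₂ + h) m h
      · rw [hmdef]; ring
      · linarith [hmy₁]
      · have := neg_abs_le h; linarith [hy₂m]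
    have hsl : |C - B₂ - h * L| ≤ 2 * |h| * (μ (Icc (y₂ - |h|) (y₂ + |h|))).toReal := by
      rw [← hLval]
      exact mySlope μ hint y₂ h (Ioi m) measurableSet_Ioi
    have hAh : (μ (Icc (y₂ - |h|) (y₂ + |h|))).toReal ≤ ε/4 := by
      refine le_trans (ENNReal.toReal_mono (measure_ne_top μ _)
        (measure_mono (Icc_subset_Icc (by linarith) (by linarith)))) hA.le
    have hBh : (μ (Icc (m - |h|) (m + |h|))).toReal ≤ ε/4 := by
      refine le_trans (ENNReal.toReal_mono (measure_ne_top μ _)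
        (measure_mono (Icc_subset_Icc (by linarith) (by linarith)))) hB.le
    calc |((A₁ + A₂) - (B₁ + C)) + (C - B₂ - h * L)|
        ≤ |(A₁ + A₂) - (B₁ + C)| + |C - B₂ - h * L| := abs_add_le _ _
    _ ≤ 2 * |h| * (ε/4) + 2 * |h| * (ε/4) := by
        refine add_le_add (hbd.trans ?_) (hsl.trans ?_) <;>
          exact mul_le_mul_of_nonneg_left (by assumption) (by positivity)
    _ = ε * |h| := by ring
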